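/- The sum of the series ∑_{n=1}^∞ (1/(n+1)) ∑_{k=0}^n (-1)^{k+1} · binom(n,k) · ln(k+1) equals γ, Euler's constant. -/

import Mathlib

open Filter Real

open MeasureTheory Set intervalIntegral


lemma rpow_lint (s : ℝ) (hs : 0 ≤ s) :
    ∫⁻ x in Ioo (0:ℝ) 1, ENNReal.ofReal (x ^ s) = ENNReal.ofReal (1/(s+1)) := by
  have hint : IntegrableOn (fun x : ℝ => x ^ s) (Ioo 0 1) := by
    refine (intervalIntegral.intervalIntegrable_rpow' (a:=0) (b:=1)
      (by linarith)).1.mono_set ?_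
    exact Ioo_subset_Ioc_self
  rw [← ofReal_integral_eq_lintegral_ofReal hint]
  · congr 1
    rw [← integral_Ioc_eq_integral_Ioo, ← intervalIntegral.integral_of_le zero_le_one,
      integral_rpow (Or.inl (by linarith)), Real.one_rpow, Real.zero_rpow (by linarith)]
    ring
  · filter_upwards [ae_restrict_mem measurableSet_Ioo] with x hx
    exact Real.rpow_nonneg hx.1.le s

lemma gk_inner (n : ℕ) (x : ℝ) (hx : x ∈ Ioo (0:ℝ) 1) :
    ∫ s in Ioo (0:ℝ) n, x ^ s = (1 - x ^ n) / (-Real.log x) := by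
  obtain ⟨hx0, hx1⟩ := hx
  have hlx : Real.log x < 0 := Real.log_neg hx0 hx1
  have h1 : ∀ s : ℝ, x ^ s = Real.exp (Real.log x * s) := fun s =>
    Real.rpow_def_of_pos hx0 s
  rw [← integral_Ioc_eq_integral_Ioo, ← intervalIntegral.integral_of_le (by positivity)]
  simp_rw [h1]
  rw [intervalIntegral.integral_comp_mul_left (f := Real.exp) (c := Real.log x),
    integral_exp, mul_zero, Real.exp_zero, smul_eq_mul, ← h1, Real.rpow_natCast]
  rw [inv_mul_eq_div, div_neg, ← neg_div, neg_sub]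
  exact hlx.ne

lemma gk_lint (n : ℕ) :
    ∫⁻ x in Ioo (0:ℝ) 1, ENNReal.ofReal ((1 - x ^ n) / (-Real.log x))
      = ENNReal.ofReal (Real.log (n+1)) := by
  have hmeas : Measurable (fun p : ℝ × ℝ => ENNReal.ofReal (p.1 ^ p.2)) := by
    measurability
  have step1 : ∀ᵐ x ∂(volume.restrict (Ioo (0:ℝ) 1)),
      ENNReal.ofReal ((1 - x ^ n) / (-Real.log x))
        = ∫⁻ s in Ioo (0:ℝ) n, ENNReal.ofReal (x ^ s) := by
    filter_upwards [ae_restrict_mem measurableSet_Ioo] with x hx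
    have hint : IntegrableOn (fun s : ℝ => x ^ s) (Ioo 0 n) := by
      have hc : Continuous fun s : ℝ => x ^ s := by
        have : (fun s : ℝ => x ^ s) = fun s => Real.exp (Real.log x * s) := by
          funext s; exact Real.rpow_def_of_pos hx.1 s
        rw [this]; continuity
      exact (hc.integrableOn_Icc).mono_set Ioo_subset_Icc_self
    rw [← gk_inner n x hx, ← ofReal_integral_eq_lintegral_ofReal hint]
    filter_upwards [ae_restrict_mem measurableSet_Ioo] with s _
    exact Real.rpow_nonneg hx.1.le s
  rw [lintegral_congr_ae step1]
  rw [lintegral_lintegral_swap hmeas.aemeasurable]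
  have step2 : ∀ᵐ s ∂(volume.restrict (Ioo (0:ℝ) (n:ℝ))),
      (∫⁻ x in Ioo (0:ℝ) 1, ENNReal.ofReal (x ^ s)) = ENNReal.ofReal (1/(s+1)) := by
    filter_upwards [ae_restrict_mem measurableSet_Ioo] with s hs
    exact rpow_lint s hs.1.le
  rw [lintegral_congr_ae step2]
  have hint2 : IntegrableOn (fun s : ℝ => 1/(s+1)) (Ioo 0 n) := by
    have hc : ContinuousOn (fun s : ℝ => 1/(s+1)) (Icc 0 n) := by
      apply ContinuousOn.div continuousOn_const (by fun_prop)
      intro s hs; have := hs.1; positivity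
    exact (hc.integrableOn_Icc).mono_set Ioo_subset_Icc_self
  rw [← ofReal_integral_eq_lintegral_ofReal hint2]
  · congr 1
    rw [← integral_Ioc_eq_integral_Ioo,
      ← intervalIntegral.integral_of_le (by positivity : (0:ℝ) ≤ n)]
    have : ∀ s : ℝ, 1/(s+1) = (s+1)⁻¹ := fun s => one_div _
    simp_rw [this]
    rw [intervalIntegral.integral_comp_add_right (fun u => u⁻¹) 1, zero_add,
      integral_inv (by
        intro h
        rcases h with h
        simp only [mem_uIcc] at h
        rcases h with ⟨h1, _⟩ | ⟨_, h2⟩ <;> linarith [Nat.cast_nonneg (α := ℝ) n]),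
      div_one]
  · filter_upwards [ae_restrict_mem measurableSet_Ioo] with s hs
    have := hs.1
    positivity

lemma int_of_lint {f : ℝ → ℝ} {μ : Measure ℝ} {c : ℝ}
    (hm : AEStronglyMeasurable f μ) (hnn : 0 ≤ᵐ[μ] f)
    (h : ∫⁻ x, ENNReal.ofReal (f x) ∂μ = ENNReal.ofReal c) (hc : 0 ≤ c) :
    Integrable f μ ∧ ∫ x, f x ∂μ = c := by
  have hfin : HasFiniteIntegral f μ := by
    rw [hasFiniteIntegral_iff_ofReal hnn, h]; exact ENNReal.ofReal_lt_top
  refine ⟨⟨hm, hfin⟩, ?_⟩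
  rw [integral_eq_lintegral_of_nonneg_ae hnn hm, h, ENNReal.toReal_ofReal hc]

-- nonnegativity of gk on Ioo 0 1
lemma gk_nonneg (n : ℕ) : ∀ x ∈ Ioo (0:ℝ) 1, 0 ≤ (1 - x ^ n) / (-Real.log x) := by
  intro x hx
  have hlx : Real.log x < 0 := Real.log_neg hx.1 hx.2
  have h1 : x ^ n ≤ 1 := pow_le_one₀ hx.1.le hx.2.le
  apply div_nonneg (by linarith) (by linarith)

lemma gk_meas (n : ℕ) : Measurable (fun x : ℝ => (1 - x ^ n) / (-Real.log x)) := by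
  measurability

lemma gk_props (n : ℕ) :
    IntegrableOn (fun x : ℝ => (1 - x ^ n) / (-Real.log x)) (Ioo 0 1) ∧
    ∫ x in Ioo (0:ℝ) 1, (1 - x ^ n) / (-Real.log x) = Real.log (n+1) := by
  refine int_of_lint (gk_meas n).aestronglyMeasurable.restrict ?_ (gk_lint n)
    (Real.log_nonneg (by push_cast; linarith [Nat.cast_nonneg (α := ℝ) n]))
  filter_upwards [ae_restrict_mem measurableSet_Ioo] with x hx
  exact gk_nonneg n x hx

noncomputable def f01 : ℝ → ℝ := fun x => 1/(1-x) + 1/Real.log x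

lemma f01_meas : Measurable f01 := by
  apply Measurable.add
  · exact measurable_const.div (measurable_const.sub measurable_id)
  · exact measurable_const.div Real.measurable_log

lemma f01_nonneg : ∀ x ∈ Ioo (0:ℝ) 1, 0 ≤ f01 x := by
  intro x hx
  have hlx : Real.log x < 0 := Real.log_neg hx.1 hx.2
  have h1x : 0 < 1 - x := by linarith [hx.2]
  have hle : 1 - x ≤ -Real.log x := by
    have := Real.log_le_sub_one_of_pos hx.1
    linarith
  have : 1/(-Real.log x) ≤ 1/(1-x) := one_div_le_one_div_of_le h1x hle
  have e : 1/Real.log x = -(1/(-Real.log x)) := by field_simp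
  rw [f01, e]
  linarith

lemma key_id (n : ℕ) (x : ℝ) (hx : x ∈ Ioo (0:ℝ) 1) :
    (1 - x ^ n) * f01 x + (1 - x ^ n) / (-Real.log x)
      = ∑ k ∈ Finset.range n, x ^ k := by
  have hlx : Real.log x < 0 := Real.log_neg hx.1 hx.2
  have h1x : x ≠ 1 := ne_of_lt hx.2
  have h1 : x - 1 ≠ 0 := sub_ne_zero.mpr h1x
  have h2 : 1 - x ≠ 0 := fun h => h1 (by linarith [sub_eq_zero.mp h])
  have e1 : (1 - x ^ n) * f01 x + (1 - x ^ n) / (-Real.log x) = (1 - x ^ n) / (1 - x) := by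
    rw [f01, div_neg, mul_add, mul_one_div, mul_one_div]
    ring
  rw [e1, geom_sum_eq h1x, div_eq_div_iff h2 h1]
  ring

lemma geom_int (n : ℕ) :
    IntegrableOn (fun x : ℝ => ∑ k ∈ Finset.range n, x ^ k) (Ioo 0 1) ∧
    ∫ x in Ioo (0:ℝ) 1, (∑ k ∈ Finset.range n, x ^ k) = (harmonic n : ℝ) := by
  constructor
  · exact ((continuous_finset_sum _ (fun k _ => continuous_pow k)).integrableOn_Icc).mono_set
      Ioo_subset_Icc_self
  · rw [← integral_Ioc_eq_integral_Ioo, ← intervalIntegral.integral_of_le zero_le_one,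
      intervalIntegral.integral_finset_sum (fun k _ => intervalIntegral.intervalIntegrable_pow k)]
    simp_rw [integral_pow]
    rw [harmonic, Rat.cast_sum]
    apply Finset.sum_congr rfl
    intro k _
    push_cast
    norm_num

lemma seq_nonneg (n : ℕ) : 0 ≤ Real.eulerMascheroniSeq n := by
  rw [← Real.eulerMascheroniSeq_zero]
  exact Real.strictMono_eulerMascheroniSeq.monotone (Nat.zero_le n)

lemma cstep (n : ℕ) :
    ∫⁻ x in Ioo (0:ℝ) 1, ENNReal.ofReal ((1 - x ^ n) * f01 x)
      = ENNReal.ofReal (Real.eulerMascheroniSeq n) := by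
  have hlog_nonneg : (0:ℝ) ≤ Real.log (n+1) :=
    Real.log_nonneg (by linarith [Nat.cast_nonneg (α := ℝ) n])
  have key : (∫⁻ x in Ioo (0:ℝ) 1, ENNReal.ofReal ((1 - x ^ n) * f01 x))
      + ENNReal.ofReal (Real.log (n+1)) = ENNReal.ofReal ((harmonic n : ℝ)) := by
    have hm1 : Measurable fun x : ℝ => ENNReal.ofReal ((1 - x ^ n) * f01 x) := by
      apply Measurable.ennreal_ofReal
      exact (measurable_const.sub (measurable_id.pow_const n)).mul f01_meas
    rw [← gk_lint n, ← lintegral_add_left hm1]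
    have hcongr : ∀ᵐ x ∂(volume.restrict (Ioo (0:ℝ) 1)),
        ENNReal.ofReal ((1 - x ^ n) * f01 x) + ENNReal.ofReal ((1 - x ^ n) / (-Real.log x))
          = ENNReal.ofReal (∑ k ∈ Finset.range n, x ^ k) := by
      filter_upwards [ae_restrict_mem measurableSet_Ioo] with x hx
      rw [← ENNReal.ofReal_add, key_id n x hx]
      · exact mul_nonneg (by nlinarith [pow_le_one₀ (n := n) hx.1.le hx.2.le]) (f01_nonneg x hx)
      · exact gk_nonneg n x hx
    rw [lintegral_congr_ae hcongr, ← ofReal_integral_eq_lintegral_ofReal (geom_int n).1,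
      (geom_int n).2]
    filter_upwards [ae_restrict_mem measurableSet_Ioo] with x hx
    exact Finset.sum_nonneg fun k _ => pow_nonneg hx.1.le k
  have e : ENNReal.ofReal ((harmonic n : ℝ))
      = ENNReal.ofReal (Real.eulerMascheroniSeq n) + ENNReal.ofReal (Real.log (n+1)) := by
    rw [← ENNReal.ofReal_add (seq_nonneg n) hlog_nonneg]
    congr 1
    rw [Real.eulerMascheroniSeq]
    push_cast
    ring
  rw [e] at key
  exact WithTop.add_right_cancel ENNReal.ofReal_ne_top key

lemma f01_lint :
    ∫⁻ x in Ioo (0:ℝ) 1, ENNReal.ofReal (f01 x)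
      = ENNReal.ofReal Real.eulerMascheroniConstant := by
  have hmct := lintegral_tendsto_of_tendsto_of_monotone
    (f := fun n x => ENNReal.ofReal ((1 - x ^ n) * f01 x))
    (F := fun x => ENNReal.ofReal (f01 x))
    (μ := volume.restrict (Ioo (0:ℝ) 1))
    (fun n => (((measurable_const.sub (measurable_id.pow_const n)).mul
      f01_meas).ennreal_ofReal).aemeasurable)
    ?_ ?_
  · simp_rw [cstep] at hmct
    have h2 : Tendsto (fun n : ℕ => ENNReal.ofReal (Real.eulerMascheroniSeq n)) atTop
        (nhds (ENNReal.ofReal Real.eulerMascheroniConstant)) :=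
      (ENNReal.continuous_ofReal.tendsto _).comp Real.tendsto_eulerMascheroniSeq
    exact tendsto_nhds_unique hmct h2
  · filter_upwards [ae_restrict_mem measurableSet_Ioo] with x hx
    intro m k hmk
    apply ENNReal.ofReal_le_ofReal
    apply mul_le_mul_of_nonneg_right _ (f01_nonneg x hx)
    have := pow_le_pow_of_le_one hx.1.le hx.2.le hmk
    linarith
  · filter_upwards [ae_restrict_mem measurableSet_Ioo] with x hx
    apply (ENNReal.continuous_ofReal.tendsto _).comp
    have h0 : Tendsto (fun n : ℕ => x ^ n) atTop (nhds 0) :=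
      tendsto_pow_atTop_nhds_zero_of_lt_one hx.1.le hx.2
    have : Tendsto (fun n : ℕ => (1 - x ^ n) * f01 x) atTop (nhds ((1 - 0) * f01 x)) :=
      ((tendsto_const_nhds.sub h0).mul tendsto_const_nhds)
    simpa using this

lemma f01_props :
    IntegrableOn f01 (Ioo 0 1) ∧
    ∫ x in Ioo (0:ℝ) 1, f01 x = Real.eulerMascheroniConstant := by
  refine int_of_lint f01_meas.aestronglyMeasurable.restrict ?_ f01_lint
    (by linarith [Real.one_half_lt_eulerMascheroniConstant])
  filter_upwards [ae_restrict_mem measurableSet_Ioo] with x hx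
  exact f01_nonneg x hx

lemma expand_pow (n : ℕ) (hn : 1 ≤ n) (x : ℝ) :
    (1 - x)^n = ∑ k ∈ Finset.range (n+1), (-1:ℝ)^(k+1) * (n.choose k) * (1 - x^k) := by
  have hxp : ∀ y : ℝ, (1 - y)^n
      = ∑ k ∈ Finset.range (n+1), (-1:ℝ)^k * y^k * (n.choose k) := by
    intro y
    rw [sub_eq_add_neg, add_comm, add_pow]
    apply Finset.sum_congr rfl
    intro k _
    rw [neg_pow y k, one_pow]
    ring
  have h0 := hxp 1
  rw [sub_self, zero_pow (by omega)] at h0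
  have hx := hxp x
  rw [hx]
  have hterm : ∀ k, (-1:ℝ)^(k+1) * (n.choose k) * (1 - x^k)
      = (-1:ℝ)^k * x^k * (n.choose k) - (-1:ℝ)^k * (1:ℝ)^k * (n.choose k) := by
    intro k; rw [pow_succ]; ring
  rw [Finset.sum_congr rfl (fun k _ => hterm k), Finset.sum_sub_distrib, ← h0]
  ring

lemma qn_props (n : ℕ) (hn : 1 ≤ n) :
    IntegrableOn (fun x : ℝ => (1-x)^n / (-Real.log x)) (Ioo 0 1) ∧
    ∫ x in Ioo (0:ℝ) 1, (1-x)^n / (-Real.log x)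
      = ∑ k ∈ Finset.range (n+1), (-1:ℝ)^(k+1) * (n.choose k) * Real.log (k+1) := by
  set p : ℝ → ℝ := fun x => ∑ k ∈ Finset.range (n+1),
    (-1:ℝ)^(k+1) * (n.choose k) * ((1 - x^k) / (-Real.log x)) with hp
  have hpint : IntegrableOn p (Ioo 0 1) := by
    apply integrable_finset_sum
    intro k _
    exact ((gk_props k).1.const_mul _)
  have hae : (fun x : ℝ => (1-x)^n / (-Real.log x)) =ᵐ[volume.restrict (Ioo (0:ℝ) 1)] p := by
    filter_upwards [ae_restrict_mem measurableSet_Ioo] with x hx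
    rw [hp]
    simp only
    rw [show (∑ k ∈ Finset.range (n+1), (-1:ℝ)^(k+1) * (n.choose k) * ((1 - x^k) / (-Real.log x)))
        = (∑ k ∈ Finset.range (n+1), (-1:ℝ)^(k+1) * (n.choose k) * (1 - x^k)) / (-Real.log x) by
      rw [Finset.sum_div]
      exact Finset.sum_congr rfl (fun k _ => (mul_div_assoc _ _ _).symm)]
    rw [← expand_pow n hn x]
  constructor
  · exact hpint.congr hae.symm
  · rw [integral_congr_ae hae]
    rw [integral_finset_sum _ (fun k _ => ((gk_props k).1.const_mul _))]
    apply Finset.sum_congr rfl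
    intro k _
    rw [MeasureTheory.integral_const_mul, (gk_props k).2]

lemma qn_nonneg (n : ℕ) (x : ℝ) (hx : x ∈ Ioo (0:ℝ) 1) :
    0 ≤ (1-x)^n / (-Real.log x) := by
  have hlx : Real.log x < 0 := Real.log_neg hx.1 hx.2
  apply div_nonneg (by nlinarith [hx.2, pow_nonneg (by linarith [hx.2] : (0:ℝ) ≤ 1 - x) n])
  linarith

lemma hN_tendsto (x : ℝ) (hx : x ∈ Ioo (0:ℝ) 1) :
    Tendsto (fun N : ℕ => ∑ n ∈ Finset.Icc 1 N,
      (1 / (n + 1) : ℝ) * ((1-x)^n / (-Real.log x))) atTop (nhds (f01 x)) := by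
  set u : ℝ := 1 - x with hu
  set L : ℝ := -Real.log x with hL
  have hx2 := hx.2
  have hu0 : 0 < u := by rw [hu]; linarith
  have hu1 : u < 1 := by rw [hu]; linarith [hx.1]
  have hL0 : 0 < L := by rw [hL]; linarith [Real.log_neg hx.1 hx.2]
  have hfx : f01 x = 1/u - 1/L := by
    rw [f01, ← hu, show Real.log x = -L by rw [hL]; ring, div_neg]
    ring
  have hxu : x = 1 - u := by rw [hu]; ring
  have hlogx : Real.log x = -L := by rw [hL]; ring
  clear_value u L
  have hu' : u ≠ 0 := hu0.ne'
  have hL' : L ≠ 0 := hL0.ne'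
  have hs : HasSum (fun m : ℕ => u^(m+1)/((m:ℝ)+1)) L := by
    have h := Real.hasSum_pow_div_log_of_abs_lt_one (x := u) (by rw [abs_of_pos hu0]; exact hu1)
    rw [← hxu, hlogx, neg_neg] at h
    exact h
  have hsum : HasSum (fun m : ℕ => u^(m+1)/((m:ℝ)+1))
      ((L - u) + ∑ i ∈ Finset.range 1, u^(i+1)/((i:ℝ)+1)) := by
    have e : (L - u) + ∑ i ∈ Finset.range 1, u^(i+1)/((i:ℝ)+1) = L := by simp
    rw [e]; exact hs
  have hs2 : HasSum (fun m : ℕ => u^((m+1)+1)/(((m+1:ℕ):ℝ)+1)) (L - u) :=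
    (hasSum_nat_add_iff 1).mpr hsum
  have hs3 : HasSum (fun m : ℕ => u^((m+1)+1)/(((m+1:ℕ):ℝ)+1)/u/L) ((L - u)/u/L) :=
    (hs2.div_const u).div_const L
  have htend := hs3.tendsto_sum_nat
  have hcongr : ∀ N : ℕ, ∑ n ∈ Finset.Icc 1 N, (1 / (n + 1) : ℝ) * (u^n / L)
      = ∑ m ∈ Finset.range N, u^((m+1)+1)/(((m+1:ℕ):ℝ)+1)/u/L := by
    intro N
    rw [← Finset.Ico_add_one_right_eq_Icc, Finset.sum_Ico_eq_sum_range]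
    apply Finset.sum_congr rfl
    intro m _
    push_cast
    field_simp
    ring
  have e2 : (L - u)/u/L = f01 x := by
    rw [hfx]
    field_simp
  rw [← e2]
  exact htend.congr (fun N => (hcongr N).symm)

/-- ∑_{n=1}^∞ (1/(n+1)) ∑_{k=0}^n (-1)^{k+1} C(n,k) ln(k+1) = γ. -/
theorem stmt_2 :
    Tendsto (fun N : ℕ => ∑ n ∈ Finset.Icc 1 N,
        (1 / (n + 1) : ℝ) * ∑ k ∈ Finset.range (n + 1),
          (-1 : ℝ) ^ (k + 1) * (n.choose k : ℝ) * Real.log (k + 1))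
      atTop (nhds Real.eulerMascheroniConstant) := by
  have hint : ∀ N : ℕ, IntegrableOn
      (fun x : ℝ => ∑ n ∈ Finset.Icc 1 N, (1 / (n + 1) : ℝ) * ((1-x)^n / (-Real.log x)))
      (Ioo 0 1) := by
    intro N
    apply integrable_finset_sum
    intro n hn
    exact ((qn_props n (Finset.mem_Icc.mp hn).1).1.const_mul _)
  have key := integral_tendsto_of_tendsto_of_monotone (μ := volume.restrict (Ioo (0:ℝ) 1))
    (f := fun N x => ∑ n ∈ Finset.Icc 1 N, (1 / (n + 1) : ℝ) * ((1-x)^n / (-Real.log x)))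
    (F := f01) hint f01_props.1 ?_ ?_
  · rw [f01_props.2] at key
    apply key.congr
    intro N
    rw [integral_finset_sum _ (fun n hn => ((qn_props n (Finset.mem_Icc.mp hn).1).1.const_mul _))]
    apply Finset.sum_congr rfl
    intro n hn
    rw [MeasureTheory.integral_const_mul, (qn_props n (Finset.mem_Icc.mp hn).1).2]
  · filter_upwards [ae_restrict_mem measurableSet_Ioo] with x hx
    intro N M hNM
    apply Finset.sum_le_sum_of_subset_of_nonneg (Finset.Icc_subset_Icc_right hNM)
    intro n _ _
    have h1 : (0:ℝ) ≤ 1/((n:ℝ)+1) := by positivity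
    exact mul_nonneg h1 (qn_nonneg n x hx)
  · filter_upwards [ae_restrict_mem measurableSet_Ioo] with x hx
    exact hN_tendsto x hx
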